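/- arXiv:2005.07284 — 5 statements merged into one kernel-verified Lean document; each statement's English description precedes it below -/
import Mathlib

section
/- Let c3 > 0 and 0 < ε < 1. Let V : [0,∞) → ℝ be a differentiable function with V(t) > 0 for all t ≥ 0, let d : [0,∞) → ℝ be a continuous function with d(t) ≥ 0 for all t ≥ 0, and suppose the relaxed CLF inequality V'(t) ≤ −(c3/ε)·V(t) + d(t) holds for all t ≥ 0. Define the scaled total relaxation w(t) = ∫₀ᵗ d(τ)/V(τ) dτ. Then V(t) ≤ e^{−(c3/ε)t + w(t)}·V(0) for all t ≥ 0. -/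
theorem stmt_1 (c3 ε : ℝ) (hc3 : 0 < c3) (hε0 : 0 < ε) (hε1 : ε < 1)
    (V d : ℝ → ℝ)
    (hVdiff : ∀ t, 0 ≤ t → DifferentiableAt ℝ V t)
    (hVpos : ∀ t, 0 ≤ t → 0 < V t)
    (hdcont : Continuous d) (hd0 : ∀ t, 0 ≤ t → 0 ≤ d t)
    (hineq : ∀ t, 0 ≤ t → deriv V t ≤ -(c3 / ε) * V t + d t)
    (w : ℝ → ℝ) (hw : ∀ t, w t = ∫ τ in (0:ℝ)..t, d τ / V τ) :
    ∀ t, 0 ≤ t → V t ≤ Real.exp (-(c3 / ε) * t + w t) * V 0 := by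
  intro t ht
  rcases eq_or_lt_of_le ht with rfl | htpos
  · simp [hw]
  set g : ℝ → ℝ := fun τ => d τ / V τ with hg
  have hVc : ∀ s, 0 ≤ s → ContinuousAt V s := fun s hs => (hVdiff s hs).continuousAt
  have hgc : ∀ s, 0 ≤ s → ContinuousAt g s := fun s hs =>
    hdcont.continuousAt.div (hVc s hs) (ne_of_gt (hVpos s hs))
  set f : ℝ → ℝ := fun s => Real.log (V s) + (c3/ε)*s - ∫ τ in (0:ℝ)..s, g τ with hf
  have hgint : ∀ s ∈ Set.Icc (0:ℝ) t, IntervalIntegrable g MeasureTheory.volume 0 s := by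
    intro s hs
    apply ContinuousOn.intervalIntegrable
    intro x hx
    rw [Set.uIcc_of_le hs.1] at hx
    exact (hgc x hx.1).continuousWithinAt
  have hfc : ContinuousOn f (Set.Icc 0 t) := by
    apply ContinuousOn.sub
    · apply ContinuousOn.add
      · exact ContinuousOn.log (fun x hx => (hVc x hx.1).continuousWithinAt)
          (fun x hx => ne_of_gt (hVpos x hx.1))
      · exact (continuous_const.mul continuous_id).continuousOn
    · have he : Set.Icc (0:ℝ) t = Set.uIcc 0 t := (Set.uIcc_of_le ht).symm
      rw [he]
      apply intervalIntegral.continuousOn_primitive_interval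
      rw [← he]
      exact ContinuousOn.integrableOn_Icc (fun x hx => (hgc x hx.1).continuousWithinAt)
  have hderiv : ∀ x ∈ Set.Ioo (0:ℝ) t,
      HasDerivAt f (deriv V x / V x + c3/ε - g x) x := by
    intro x hx
    have hx0 : (0:ℝ) ≤ x := hx.1.le
    have hlog : HasDerivAt (fun s => Real.log (V s)) (deriv V x / V x) x :=
      ((hVdiff x hx0).hasDerivAt).log (ne_of_gt (hVpos x hx0))
    have hlin : HasDerivAt (fun s => (c3/ε)*s) (c3/ε) x := by
      simpa using (hasDerivAt_id x).const_mul (c3/ε)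
    have hcont : ContinuousOn g (Set.Ioi (0:ℝ)) :=
      fun y hy => (hgc y (le_of_lt hy)).continuousWithinAt
    have hmeas : StronglyMeasurableAtFilter g (nhds x) MeasureTheory.volume :=
      ContinuousOn.stronglyMeasurableAtFilter isOpen_Ioi hcont x hx.1
    have hint : HasDerivAt (fun s => ∫ τ in (0:ℝ)..s, g τ) (g x) x :=
      intervalIntegral.integral_hasDerivAt_right (hgint x ⟨hx0, hx.2.le⟩) hmeas (hgc x hx0)
    exact (hlog.add hlin).sub hint
  have hanti : AntitoneOn f (Set.Icc 0 t) := by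
    apply antitoneOn_of_deriv_nonpos (convex_Icc 0 t) hfc
    · intro x hx
      rw [interior_Icc] at hx
      exact ((hderiv x hx).differentiableAt).differentiableWithinAt
    · intro x hx
      rw [interior_Icc] at hx
      rw [(hderiv x hx).deriv]
      have hx0 : (0:ℝ) ≤ x := hx.1.le
      have hV := hVpos x hx0
      have h1 := hineq x hx0
      have hle : (deriv V x + c3 / ε * V x - d x) / V x ≤ 0 :=
        div_nonpos_of_nonpos_of_nonneg (by linarith) hV.le
      have heq : deriv V x / V x + c3/ε - g x
          = (deriv V x + c3/ε * V x - d x) / V x := by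
        simp only [hg]; field_simp
      rw [heq]; exact hle
  have hft : f t ≤ f 0 := hanti (Set.left_mem_Icc.mpr ht) (Set.right_mem_Icc.mpr ht) ht
  have hf0 : f 0 = Real.log (V 0) := by simp [hf]
  have hlogle : Real.log (V t) ≤ -(c3/ε)*t + w t + Real.log (V 0) := by
    rw [hw]
    have : Real.log (V t) + (c3/ε)*t - ∫ τ in (0:ℝ)..t, g τ ≤ Real.log (V 0) := by
      rw [← hf0]; exact hft
    simp only [hg] at this ⊢
    linarith
  calc V t = Real.exp (Real.log (V t)) := (Real.exp_log (hVpos t ht)).symm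
    _ ≤ Real.exp (-(c3/ε)*t + w t + Real.log (V 0)) := Real.exp_le_exp.mpr hlogle
    _ = Real.exp (-(c3/ε)*t + w t) * V 0 := by
        rw [Real.exp_add, Real.exp_log (hVpos 0 le_rfl)]
end

section
/- Let c1, c2, c3 > 0 and 0 < ε < 1. Let V : [0,∞) → ℝ be a differentiable function with V(t) > 0 for all t ≥ 0, let η : [0,∞) → ℝ^n satisfy c1·‖η(t)‖² ≤ V(t) ≤ (c2/ε²)·‖η(t)‖² for all t ≥ 0, let d : [0,∞) → ℝ be continuous with d(t) ≥ 0, and suppose V'(t) ≤ −(c3/ε)·V(t) + d(t) for all t ≥ 0. Define w(t) = ∫₀ᵗ d(τ)/V(τ) dτ. Then ‖η(t)‖ ≤ √(c2/c1)·(1/ε)·e^{−(c3/(2ε))t + w(t)/2}·‖η(0)‖ for all t ≥ 0. -/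
open MeasureTheory intervalIntegral Set

theorem stmt_2 (n : ℕ) (c1 c2 c3 ε : ℝ)
    (hc1 : 0 < c1) (hc2 : 0 < c2) (hc3 : 0 < c3) (hε0 : 0 < ε) (hε1 : ε < 1)
    (V d : ℝ → ℝ) (η : ℝ → EuclideanSpace ℝ (Fin n))
    (hVdiff : ∀ t, 0 ≤ t → DifferentiableAt ℝ V t)
    (hVpos : ∀ t, 0 ≤ t → 0 < V t)
    (hsandwich : ∀ t, 0 ≤ t → c1 * ‖η t‖ ^ 2 ≤ V t ∧ V t ≤ (c2 / ε ^ 2) * ‖η t‖ ^ 2)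
    (hdcont : Continuous d) (hd0 : ∀ t, 0 ≤ t → 0 ≤ d t)
    (hineq : ∀ t, 0 ≤ t → deriv V t ≤ -(c3 / ε) * V t + d t)
    (w : ℝ → ℝ) (hw : ∀ t, w t = ∫ τ in (0:ℝ)..t, d τ / V τ) :
    ∀ t, 0 ≤ t →
      ‖η t‖ ≤ Real.sqrt (c2 / c1) * (1 / ε) *
        Real.exp (-(c3 / (2 * ε)) * t + w t / 2) * ‖η 0‖ := by
  intro t ht
  set f : ℝ → ℝ := fun τ => d τ / V τ with hf
  have hVcont : ∀ s, 0 ≤ s → ContinuousAt V s := fun s hs => (hVdiff s hs).continuousAt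
  have hfcont : ∀ s, 0 ≤ s → ContinuousAt f s := fun s hs =>
    hdcont.continuousAt.div (hVcont s hs) (hVpos s hs).ne'
  have hw0 : w 0 = 0 := by simp [hw]
  -- key bound : V t ≤ V 0 * exp previous
  have key : V t ≤ V 0 * Real.exp (-(c3/ε)*t + w t) := by
    rcases eq_or_lt_of_le ht with rfl | ht0
    · simp [hw0]
    · set F : ℝ → ℝ := fun s => V s * Real.exp ((c3/ε)*s - w s) with hF
      have hweq : w = fun x => ∫ τ in (0:ℝ)..x, f τ := funext hw
      have hfOn : ContinuousOn f (Icc 0 t) := fun x hx => (hfcont x hx.1).continuousWithinAt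
      have hwcont : ContinuousOn w (Icc 0 t) := by
        rw [hweq]
        have := continuousOn_primitive_interval (a := (0:ℝ)) (b := t) (f := f) (μ := volume)
          (by
            apply ContinuousOn.integrableOn_compact isCompact_uIcc
            rwa [uIcc_of_le ht])
        rwa [uIcc_of_le ht] at this
      have hw' : ∀ s ∈ Ioo (0:ℝ) t, HasDerivAt w (f s) s := by
        intro s hs
        rw [hweq]
        refine integral_hasDerivAt_right ?_ ?_ (hfcont s hs.1.le)
        · apply ContinuousOn.intervalIntegrable
          intro x hx
          rw [uIcc_of_le hs.1.le] at hx
          exact (hfcont x hx.1).continuousWithinAt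
        · exact ContinuousAt.stronglyMeasurableAtFilter isOpen_Ioi
            (fun x hx => hfcont x (le_of_lt hx)) s hs.1
      have hF' : ∀ s ∈ Ioo (0:ℝ) t, HasDerivAt F
          (deriv V s * Real.exp ((c3/ε)*s - w s)
            + V s * (Real.exp ((c3/ε)*s - w s) * (c3/ε - f s))) s := by
        intro s hs
        have hV' : HasDerivAt V (deriv V s) s := (hVdiff s hs.1.le).hasDerivAt
        have hg : HasDerivAt (fun x => (c3/ε)*x - w x) (c3/ε - f s) s := by
          have := ((hasDerivAt_id s).const_mul (c3/ε)).sub (hw' s hs)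
          rw [mul_one] at this
          exact this
        exact hV'.mul hg.exp
      have hanti : AntitoneOn F (Icc 0 t) := by
        apply antitoneOn_of_deriv_nonpos (convex_Icc 0 t)
        · exact ContinuousOn.mul (fun x hx => (hVcont x hx.1).continuousWithinAt)
            (Real.continuous_exp.comp_continuousOn
              ((continuousOn_const.mul continuousOn_id).sub hwcont))
        · rw [interior_Icc]
          exact fun x hx => (hF' x hx).differentiableAt.differentiableWithinAt
        · rw [interior_Icc]
          intro x hx
          rw [(hF' x hx).deriv]
          have hVx := hVpos x hx.1.le
          have hdx := hineq x hx.1.le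
          have hfx : V x * f x = d x := by
            simp only [hf]
            field_simp [hVx.ne']
          have hexp : 0 < Real.exp ((c3/ε)*x - w x) := Real.exp_pos _
          have : deriv V x * Real.exp ((c3/ε)*x - w x)
              + V x * (Real.exp ((c3/ε)*x - w x) * (c3/ε - f x))
              = (deriv V x + (c3/ε) * V x - d x) * Real.exp ((c3/ε)*x - w x) := by
            rw [← hfx]; ring
          rw [this]
          apply mul_nonpos_of_nonpos_of_nonneg _ hexp.le
          linarith
      have hFt : F t ≤ F 0 := hanti (by constructor <;> simp [ht]) (by simp [ht]) ht
      have hF0 : F 0 = V 0 := by simp [hF, hw0]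
      rw [hF0] at hFt
      have : V t = F t * Real.exp (-(c3/ε)*t + w t) := by
        rw [hF, mul_assoc, ← Real.exp_add]
        ring_nf
        simp
      rw [this]
      exact mul_le_mul_of_nonneg_right hFt (Real.exp_pos _).le
  -- now deduce the norm bound
  have h1 := (hsandwich t ht).1
  have h2 := (hsandwich 0 le_rfl).2
  set E := -(c3/ε)*t + w t with hE
  have hexpE : (0:ℝ) < Real.exp E := Real.exp_pos _
  have hsq : ‖η t‖^2 ≤ (c2 / c1) * (1/ε)^2 * Real.exp E * ‖η 0‖^2 := by
    have h3 : V t ≤ (c2 / ε^2) * ‖η 0‖^2 * Real.exp E :=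
      key.trans (by nlinarith)
    have h4 : c1 * ‖η t‖^2 ≤ (c2 / ε^2) * ‖η 0‖^2 * Real.exp E := h1.trans h3
    rw [show c2 / c1 * (1/ε)^2 * Real.exp E * ‖η 0‖^2
        = (c2 / ε^2 * ‖η 0‖^2 * Real.exp E) / c1 by field_simp,
      le_div_iff₀ hc1]
    linarith
  have hRnn : 0 ≤ Real.sqrt (c2 / c1) * (1 / ε) * Real.exp (-(c3 / (2 * ε)) * t + w t / 2) * ‖η 0‖ :=
    by positivity
  have hRsq : (Real.sqrt (c2 / c1) * (1 / ε) * Real.exp (-(c3 / (2 * ε)) * t + w t / 2) * ‖η 0‖)^2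
      = (c2 / c1) * (1/ε)^2 * Real.exp E * ‖η 0‖^2 := by
    have h5 : Real.sqrt (c2 / c1) ^ 2 = c2 / c1 :=
      Real.sq_sqrt (by positivity)
    have h6 : Real.exp (-(c3 / (2 * ε)) * t + w t / 2) ^ 2 = Real.exp E := by
      rw [← Real.exp_nat_mul]
      congr 1
      rw [hE]
      field_simp
      ring
    rw [mul_pow, mul_pow, mul_pow, h5, h6]
  calc ‖η t‖ = Real.sqrt (‖η t‖^2) := (Real.sqrt_sq (norm_nonneg _)).symm
    _ ≤ Real.sqrt ((Real.sqrt (c2 / c1) * (1 / ε) * Real.exp (-(c3 / (2 * ε)) * t + w t / 2) * ‖η 0‖)^2) := by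
        apply Real.sqrt_le_sqrt; rw [hRsq]; exact hsq
    _ = _ := Real.sqrt_sq hRnn
end

section
/- (Lemma 1, concrete form.) Let c1, c2, c3 > 0, 0 < ε < 1, and let T* > 0 and ΔT > 0 satisfy T* − ΔT > 0. Let V : [0,∞) → ℝ be differentiable with V(t) > 0 for all t ≥ 0, let η : [0,∞) → ℝ^n satisfy c1·‖η(t)‖² ≤ V(t) ≤ (c2/ε²)·‖η(t)‖² for all t ≥ 0, let d : [0,∞) → ℝ be continuous with d(t) ≥ 0, and suppose V'(t) ≤ −(c3/ε)·V(t) + d(t) for all t ≥ 0; set w(t) = ∫₀ᵗ d(τ)/V(τ) dτ. Let c̄3 be any constant with 0 < c̄3 ≤ c3 and (1/ε)·e^{−(c̄3/(2ε))(T*−ΔT)} ≤ 2e^{−1}/((T*−ΔT)·c3), and define w̄ = ((c3 − c̄3)/ε)·(T* − ΔT). If T_I is a time with T* − ΔT ≤ T_I ≤ T* + ΔT and w(T_I) ≤ w̄, then ‖η(T_I)‖ ≤ √(c2/c1)·(2e^{−1}/((T*−ΔT)·c3))·‖η(0)‖. -/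
set_option maxHeartbeats 1000000

theorem stmt_6 (n : ℕ) (c1 c2 c3 ε : ℝ)
    (hc1 : 0 < c1) (hc2 : 0 < c2) (hc3 : 0 < c3) (hε0 : 0 < ε) (hε1 : ε < 1)
    (Tstar ΔT : ℝ) (hTstar : 0 < Tstar) (hΔT : 0 < ΔT) (hTd : 0 < Tstar - ΔT)
    (V d : ℝ → ℝ) (η : ℝ → EuclideanSpace ℝ (Fin n))
    (hVdiff : ∀ t, 0 ≤ t → DifferentiableAt ℝ V t)
    (hVpos : ∀ t, 0 ≤ t → 0 < V t)
    (hsandwich : ∀ t, 0 ≤ t → c1 * ‖η t‖ ^ 2 ≤ V t ∧ V t ≤ (c2 / ε ^ 2) * ‖η t‖ ^ 2)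
    (hdcont : Continuous d) (hd0 : ∀ t, 0 ≤ t → 0 ≤ d t)
    (hineq : ∀ t, 0 ≤ t → deriv V t ≤ -(c3 / ε) * V t + d t)
    (w : ℝ → ℝ) (hw : ∀ t, w t = ∫ τ in (0:ℝ)..t, d τ / V τ)
    (c3bar : ℝ) (hc3bar0 : 0 < c3bar) (hc3bar : c3bar ≤ c3)
    (hc3bound : (1 / ε) * Real.exp (-(c3bar / (2 * ε)) * (Tstar - ΔT)) ≤
      2 * Real.exp (-1) / ((Tstar - ΔT) * c3))
    (wbar : ℝ) (hwbar : wbar = ((c3 - c3bar) / ε) * (Tstar - ΔT))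
    (TI : ℝ) (hTI1 : Tstar - ΔT ≤ TI) (hTI2 : TI ≤ Tstar + ΔT)
    (hwTI : w TI ≤ wbar) :
    ‖η TI‖ ≤ Real.sqrt (c2 / c1) * (2 * Real.exp (-1) / ((Tstar - ΔT) * c3)) * ‖η 0‖ := by
  have hwfun : w = fun t => ∫ τ in (0:ℝ)..t, d τ / V τ := funext hw
  subst hwfun
  subst hwbar
  have hTI0 : (0:ℝ) ≤ TI := le_trans hTd.le hTI1
  -- continuity of the integrand on [0,∞)
  set f : ℝ → ℝ := fun τ => d τ / V τ with hf
  have hVc : ∀ t, 0 ≤ t → ContinuousAt V t := fun t ht => (hVdiff t ht).continuousAt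
  have hfc : ∀ t, 0 ≤ t → ContinuousAt f t := fun t ht =>
    (hdcont.continuousAt).div (hVc t ht) (ne_of_gt (hVpos t ht))
  have hfpos : ∀ t, 0 ≤ t → 0 ≤ f t := fun t ht =>
    div_nonneg (hd0 t ht) (hVpos t ht).le
  have hfco : ContinuousOn f (Set.Icc 0 TI) := fun x hx =>
    (hfc x hx.1).continuousWithinAt
  have hInt : ∀ t ∈ Set.Icc (0:ℝ) TI, IntervalIntegrable f MeasureTheory.volume 0 t := by
    intro t ht
    apply ContinuousOn.intervalIntegrable
    intro x hx
    rw [Set.uIcc_of_le ht.1] at hx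
    exact (hfc x hx.1).continuousWithinAt
  -- the auxiliary function g
  set g : ℝ → ℝ := fun t => Real.log (V t) + (c3 / ε) * t - ∫ τ in (0:ℝ)..t, f τ with hg
  -- derivative facts on the interior
  have hderiv : ∀ x ∈ Set.Ioo (0:ℝ) TI,
      HasDerivAt g (deriv V x / V x + c3 / ε - f x) x := by
    intro x hx
    have hx0 : 0 ≤ x := hx.1.le
    have hVx : HasDerivAt V (deriv V x) x := (hVdiff x hx0).hasDerivAt
    have hlog : HasDerivAt (fun t => Real.log (V t)) (deriv V x / V x) x :=
      hVx.log (ne_of_gt (hVpos x hx0))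
    have hlin : HasDerivAt (fun t => (c3 / ε) * t) (c3 / ε) x := by
      simpa using (hasDerivAt_id x).const_mul (c3 / ε)
    have hmeas : StronglyMeasurableAtFilter f (nhds x) MeasureTheory.volume := by
      refine ContinuousAt.stronglyMeasurableAtFilter (s := Set.Ioi (0:ℝ)) isOpen_Ioi
        (fun y hy => hfc y (le_of_lt hy)) x hx.1
    have hwder : HasDerivAt (fun t => ∫ τ in (0:ℝ)..t, f τ) (f x) x :=
      intervalIntegral.integral_hasDerivAt_right
        (hInt x ⟨hx0, hx.2.le⟩) hmeas (hfc x hx0)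
    exact (hlog.add hlin).sub hwder
  have hderiv_nonpos : ∀ x ∈ Set.Ioo (0:ℝ) TI, deriv g x ≤ 0 := by
    intro x hx
    rw [(hderiv x hx).deriv]
    have hVx : 0 < V x := hVpos x hx.1.le
    have h := hineq x hx.1.le
    have h2 : deriv V x / V x ≤ (-(c3 / ε) * V x + d x) / V x :=
      div_le_div_of_nonneg_right h hVx.le
    have h3 : (-(c3 / ε) * V x + d x) / V x = -(c3 / ε) + f x := by
      field_simp [hf]
      have hfx : V x * f x = d x := by
        simp only [hf]
        field_simp
      linear_combination (-ε) * hfx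
    rw [h3] at h2
    linarith
  -- g is antitone on [0, TI]
  have hgcont : ContinuousOn g (Set.Icc 0 TI) := by
    apply ContinuousOn.sub
    · apply ContinuousOn.add
      · exact fun x hx => (((hVc x hx.1).log (ne_of_gt (hVpos x hx.1))).continuousWithinAt)
      · exact (continuous_const.mul continuous_id).continuousOn
    · have : Set.Icc (0:ℝ) TI = Set.uIcc (0:ℝ) TI := (Set.uIcc_of_le hTI0).symm
      rw [this]
      exact intervalIntegral.continuousOn_primitive_interval
        (by rw [← this]; exact hfco.integrableOn_compact isCompact_Icc)
  have hanti : AntitoneOn g (Set.Icc 0 TI) := by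
    apply antitoneOn_of_deriv_nonpos (convex_Icc 0 TI) hgcont
    · intro x hx
      rw [interior_Icc] at hx
      exact (hderiv x hx).differentiableAt.differentiableWithinAt
    · intro x hx
      rw [interior_Icc] at hx
      exact hderiv_nonpos x hx
  have hgle : g TI ≤ g 0 :=
    hanti (Set.left_mem_Icc.mpr hTI0) (Set.right_mem_Icc.mpr hTI0) hTI0
  have hg0 : g 0 = Real.log (V 0) := by simp [hg]
  -- unfold
  set wTI : ℝ := ∫ τ in (0:ℝ)..TI, f τ with hwTIdef
  have hlogle : Real.log (V TI) ≤ Real.log (V 0) - (c3 / ε) * TI + wTI := by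
    have : Real.log (V TI) + (c3 / ε) * TI - wTI ≤ Real.log (V 0) := by
      rw [← hg0]; exact hgle
    linarith
  have hV0pos' := hVpos 0 le_rfl
  have hVTI : V TI ≤ V 0 * Real.exp (-(c3 / ε) * TI + wTI) := by
    have h1 : Real.log (V TI) ≤ Real.log (V 0) + (-(c3 / ε) * TI + wTI) := by linarith
    have h2 := (Real.log_le_iff_le_exp (hVpos TI hTI0)).mp h1
    rwa [Real.exp_add, Real.exp_log hV0pos'] at h2
  -- exponent bound
  have hcfac : 0 ≤ (c3 - c3bar) / ε := div_nonneg (by linarith) hε0.le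
  have hwb2 : wTI ≤ ((c3 - c3bar) / ε) * TI :=
    le_trans hwTI (mul_le_mul_of_nonneg_left hTI1 hcfac)
  have hexp1 : -(c3 / ε) * TI + wTI ≤ -(c3bar / ε) * (Tstar - ΔT) := by
    have h1 : -(c3 / ε) * TI + ((c3 - c3bar) / ε) * TI = -(c3bar / ε) * TI := by
      field_simp; ring
    have h2 : -(c3bar / ε) * TI ≤ -(c3bar / ε) * (Tstar - ΔT) := by
      have hpos : 0 ≤ c3bar / ε := div_nonneg hc3bar0.le hε0.le
      nlinarith
    linarith
  -- combine with the sandwich bounds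
  have hs1 := (hsandwich TI hTI0).1
  have hs2 := (hsandwich 0 le_rfl).2
  set K : ℝ := 2 * Real.exp (-1) / ((Tstar - ΔT) * c3) with hK
  have hKpos : 0 < K := by positivity
  have hexp2 : Real.exp (-(c3 / ε) * TI + wTI) ≤ Real.exp (-(c3bar / ε) * (Tstar - ΔT)) :=
    Real.exp_le_exp.mpr hexp1
  have hV0pos := hVpos 0 le_rfl
  have hchain : c1 * ‖η TI‖ ^ 2 ≤
      (c2 / ε ^ 2) * ‖η 0‖ ^ 2 * Real.exp (-(c3bar / ε) * (Tstar - ΔT)) := by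
    calc c1 * ‖η TI‖ ^ 2 ≤ V TI := hs1
      _ ≤ V 0 * Real.exp (-(c3 / ε) * TI + wTI) := hVTI
      _ ≤ V 0 * Real.exp (-(c3bar / ε) * (Tstar - ΔT)) := by
          exact mul_le_mul_of_nonneg_left hexp2 hV0pos.le
      _ ≤ (c2 / ε ^ 2) * ‖η 0‖ ^ 2 * Real.exp (-(c3bar / ε) * (Tstar - ΔT)) := by
          exact mul_le_mul_of_nonneg_right hs2 (Real.exp_pos _).le
  -- square of the key constant bound
  have hsq : (1 / ε) ^ 2 * Real.exp (-(c3bar / ε) * (Tstar - ΔT)) ≤ K ^ 2 := by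
    have hexpsq : Real.exp (-(c3bar / (2 * ε)) * (Tstar - ΔT)) ^ 2
        = Real.exp (-(c3bar / ε) * (Tstar - ΔT)) := by
      rw [sq, ← Real.exp_add]
      congr 1
      field_simp
      ring
    have hlhs : (1 / ε) ^ 2 * Real.exp (-(c3bar / ε) * (Tstar - ΔT))
        = ((1 / ε) * Real.exp (-(c3bar / (2 * ε)) * (Tstar - ΔT))) ^ 2 := by
      rw [mul_pow, hexpsq]
    rw [hlhs]
    have hlpos : 0 ≤ (1 / ε) * Real.exp (-(c3bar / (2 * ε)) * (Tstar - ΔT)) := by positivity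
    exact pow_le_pow_left₀ hlpos hc3bound 2
  -- final squared inequality
  have hfin : ‖η TI‖ ^ 2 ≤ (Real.sqrt (c2 / c1) * K * ‖η 0‖) ^ 2 := by
    have hsqrt : Real.sqrt (c2 / c1) ^ 2 = c2 / c1 :=
      Real.sq_sqrt (by positivity)
    rw [mul_pow, mul_pow, hsqrt]
    have key : c1 * ‖η TI‖ ^ 2 ≤ c2 * K ^ 2 * ‖η 0‖ ^ 2 := by
      have h1 : c2 / ε ^ 2 * ‖η 0‖ ^ 2 * Real.exp (-(c3bar / ε) * (Tstar - ΔT))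
          = (c2 * ‖η 0‖ ^ 2) * ((1 / ε) ^ 2 * Real.exp (-(c3bar / ε) * (Tstar - ΔT))) := by
        ring
      rw [h1] at hchain
      have h2 : (c2 * ‖η 0‖ ^ 2) * ((1 / ε) ^ 2 * Real.exp (-(c3bar / ε) * (Tstar - ΔT)))
          ≤ (c2 * ‖η 0‖ ^ 2) * K ^ 2 :=
        mul_le_mul_of_nonneg_left hsq (by positivity)
      linarith only [hchain, h2]
    have heq : c2 / c1 * K ^ 2 * ‖η 0‖ ^ 2 = c2 * K ^ 2 * ‖η 0‖ ^ 2 / c1 := by ring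
    rw [heq, le_div_iff₀ hc1]
    linarith only [key]
  have hrhs : 0 ≤ Real.sqrt (c2 / c1) * K * ‖η 0‖ := by positivity
  calc ‖η TI‖ = Real.sqrt (‖η TI‖ ^ 2) := by rw [Real.sqrt_sq (norm_nonneg _)]
    _ ≤ Real.sqrt ((Real.sqrt (c2 / c1) * K * ‖η 0‖) ^ 2) := Real.sqrt_le_sqrt hfin
    _ = Real.sqrt (c2 / c1) * K * ‖η 0‖ := Real.sqrt_sq hrhs
end

section
/- Let c3 > 0, 0 < ε < 1, and let T* > 0 and ΔT > 0 satisfy T* − ΔT > 0. Let V : [0,∞) → ℝ be differentiable with V(t) > 0 for all t ≥ 0, let d : [0,∞) → ℝ be continuous with d(t) ≥ 0, and suppose V'(t) ≤ −(c3/ε)·V(t) + d(t) for all t ≥ 0; set w(t) = ∫₀ᵗ d(τ)/V(τ) dτ. Let c̄3 be any constant with 0 < c̄3 ≤ c3, define w̄ = ((c3 − c̄3)/ε)·(T* − ΔT), and let T_I be a time with T_I ≥ T* − ΔT and w(T_I) ≤ w̄. Then V(T_I) ≤ e^{−(c̄3/ε)(T*−ΔT)}·V(0). -/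
theorem stmt_7 (c3 ε : ℝ) (hc3 : 0 < c3) (hε0 : 0 < ε) (hε1 : ε < 1)
    (Tstar ΔT : ℝ) (hTstar : 0 < Tstar) (hΔT : 0 < ΔT) (hTd : 0 < Tstar - ΔT)
    (V d : ℝ → ℝ)
    (hVdiff : ∀ t, 0 ≤ t → DifferentiableAt ℝ V t)
    (hVpos : ∀ t, 0 ≤ t → 0 < V t)
    (hdcont : Continuous d) (hd0 : ∀ t, 0 ≤ t → 0 ≤ d t)
    (hineq : ∀ t, 0 ≤ t → deriv V t ≤ -(c3 / ε) * V t + d t)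
    (w : ℝ → ℝ) (hw : ∀ t, w t = ∫ τ in (0:ℝ)..t, d τ / V τ)
    (c3bar : ℝ) (hc3bar0 : 0 < c3bar) (hc3bar : c3bar ≤ c3)
    (wbar : ℝ) (hwbar : wbar = ((c3 - c3bar) / ε) * (Tstar - ΔT))
    (TI : ℝ) (hTI1 : Tstar - ΔT ≤ TI) (hwTI : w TI ≤ wbar) :
    V TI ≤ Real.exp (-(c3bar / ε) * (Tstar - ΔT)) * V 0 := by
  set f : ℝ → ℝ := fun τ => d τ / V τ with hf
  have hTI0 : 0 < TI := lt_of_lt_of_le hTd hTI1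
  have hVcontAt : ∀ t, 0 ≤ t → ContinuousAt V t := fun t ht => (hVdiff t ht).continuousAt
  have hfcontOn : ∀ s : Set ℝ, s ⊆ Set.Ici 0 → ContinuousOn f s := by
    intro s hs t ht
    exact (hdcont.continuousAt.continuousWithinAt).div
      ((hVcontAt t (hs ht)).continuousWithinAt) (hVpos t (hs ht)).ne'
  have hfint : ∀ t, 0 ≤ t → IntervalIntegrable f MeasureTheory.volume 0 t := by
    intro t ht
    apply ContinuousOn.intervalIntegrable
    apply hfcontOn
    rw [Set.uIcc_of_le ht]
    exact fun x hx => hx.1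
  -- derivative of w-like primitive
  have hwderiv : ∀ t ∈ Set.Ioo 0 TI,
      HasDerivAt (fun u => ∫ τ in (0:ℝ)..u, f τ) (f t) t := by
    intro t ht
    have hcont : ContinuousAt f t := by
      have : ContinuousAt V t := hVcontAt t ht.1.le
      exact (hdcont.continuousAt).div this (hVpos t ht.1.le).ne'
    have hmeas : StronglyMeasurableAtFilter f (nhds t) MeasureTheory.volume :=
      ContinuousOn.stronglyMeasurableAtFilter isOpen_Ioi
        (hfcontOn _ Set.Ioi_subset_Ici_self) t ht.1
    exact intervalIntegral.integral_hasDerivAt_right (hfint t ht.1.le) hmeas hcont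
  set F : ℝ → ℝ := fun t => Real.log (V t) + (c3 / ε) * t - w t with hF
  have hFderiv : ∀ t ∈ Set.Ioo 0 TI,
      HasDerivAt F (deriv V t / V t + c3 / ε - f t) t := by
    intro t ht
    have hV : HasDerivAt V (deriv V t) t := (hVdiff t ht.1.le).hasDerivAt
    have hlog : HasDerivAt (fun x => Real.log (V x)) (deriv V t / V t) t :=
      hV.log (hVpos t ht.1.le).ne'
    have hlin : HasDerivAt (fun x : ℝ => (c3 / ε) * x) (c3 / ε) t := by
      simpa using (hasDerivAt_id t).const_mul (c3 / ε)
    have hwd : HasDerivAt w (f t) t := by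
      have := hwderiv t ht
      apply this.congr_of_eventuallyEq
      filter_upwards with x
      rw [hw x]
    exact (hlog.add hlin).sub hwd
  have hFderiv_nonpos : ∀ t ∈ Set.Ioo 0 TI,
      deriv V t / V t + c3 / ε - f t ≤ 0 := by
    intro t ht
    have hVt := hVpos t ht.1.le
    have h1 : deriv V t / V t ≤ (-(c3 / ε) * V t + d t) / V t := by
      gcongr
      exact hineq t ht.1.le
    have h2 : (-(c3 / ε) * V t + d t) / V t = -(c3 / ε) + d t / V t := by
      field_simp
    rw [h2] at h1
    simp only [hf] at *
    linarith
  -- F is antitone on [0, TI]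
  have hFanti : AntitoneOn F (Set.Icc 0 TI) := by
    apply antitoneOn_of_deriv_nonpos (convex_Icc 0 TI)
    · -- continuity
      apply ContinuousOn.sub
      · apply ContinuousOn.add
        · apply ContinuousOn.log
          · intro t ht
            exact (hVcontAt t ht.1).continuousWithinAt
          · intro t ht
            exact (hVpos t ht.1).ne'
        · exact (continuous_const.mul continuous_id).continuousOn
      · have h1 : ContinuousOn (fun u => ∫ τ in (0:ℝ)..u, f τ) (Set.uIcc 0 TI) := by
          apply intervalIntegral.continuousOn_primitive_interval
          rw [Set.uIcc_of_le hTI0.le]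
          apply ContinuousOn.integrableOn_compact isCompact_Icc
          exact hfcontOn _ (fun x hx => hx.1)
        rw [Set.uIcc_of_le hTI0.le] at h1
        apply h1.congr
        intro x hx
        rw [hw x]
    · intro t ht
      rw [interior_Icc] at ht
      exact ((hFderiv t ht).differentiableAt).differentiableWithinAt
    · intro t ht
      rw [interior_Icc] at ht
      rw [(hFderiv t ht).deriv]
      exact hFderiv_nonpos t ht
  have h0mem : (0:ℝ) ∈ Set.Icc (0:ℝ) TI := ⟨le_refl 0, hTI0.le⟩
  have hTImem : TI ∈ Set.Icc (0:ℝ) TI := ⟨hTI0.le, le_refl TI⟩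
  have hFle : F TI ≤ F 0 := hFanti h0mem hTImem hTI0.le
  have hw0 : w 0 = 0 := by rw [hw]; simp
  have hkey : Real.log (V TI) ≤ Real.log (V 0) - (c3 / ε) * TI + w TI := by
    simp only [hF, hw0] at hFle
    linarith [hFle]
  -- bound the exponent
  have hcε : 0 < c3 / ε := div_pos hc3 hε0
  have hexp : Real.log (V 0) - (c3 / ε) * TI + w TI ≤
      Real.log (V 0) + (-(c3bar / ε) * (Tstar - ΔT)) := by
    have h1 : w TI ≤ ((c3 - c3bar) / ε) * (Tstar - ΔT) := hwbar ▸ hwTI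
    have h2 : (c3 / ε) * (Tstar - ΔT) ≤ (c3 / ε) * TI :=
      mul_le_mul_of_nonneg_left hTI1 hcε.le
    have h3 : ((c3 - c3bar) / ε) * (Tstar - ΔT) - (c3 / ε) * (Tstar - ΔT)
        = -(c3bar / ε) * (Tstar - ΔT) := by ring
    linarith
  have hVTI := hVpos TI hTI0.le
  have hV0 := hVpos 0 le_rfl
  calc V TI = Real.exp (Real.log (V TI)) := (Real.exp_log hVTI).symm
    _ ≤ Real.exp (Real.log (V 0) + (-(c3bar / ε) * (Tstar - ΔT))) :=
        Real.exp_le_exp.mpr (le_trans hkey hexp)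
    _ = Real.exp (-(c3bar / ε) * (Tstar - ΔT)) * V 0 := by
        rw [Real.exp_add, Real.exp_log hV0, mul_comm]
end

section
/- Let γ > 0, T > 0, and let h : [0, T] → ℝ be continuously differentiable with h(0) > 0. Suppose that for every t ∈ [0, T] with h(t) > 0 one has h'(t) ≥ −γ·h(t)³. Then for all t ∈ [0, T], h(t) ≥ h(0)/√(1 + 2γ·h(0)²·t) > 0; in particular h(t) > 0 for all t ∈ [0, T]. -/
open Set

theorem stmt_10 (γ T : ℝ) (hγ : 0 < γ) (hT : 0 < T)
    (h h' : ℝ → ℝ)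
    (hderiv : ∀ t ∈ Set.Icc (0:ℝ) T, HasDerivAt h (h' t) t)
    (hcont : ContinuousOn h' (Set.Icc (0:ℝ) T))
    (h0 : 0 < h 0)
    (hcond : ∀ t ∈ Set.Icc (0:ℝ) T, 0 < h t → -γ * (h t) ^ 3 ≤ h' t) :
    ∀ t ∈ Set.Icc (0:ℝ) T,
      h 0 / Real.sqrt (1 + 2 * γ * (h 0) ^ 2 * t) ≤ h t ∧ 0 < h t := by
  set c : ℝ := 2 * γ * (h 0) ^ 2 with hc
  have hcpos : 0 < c := by positivity
  set g : ℝ → ℝ := fun s => h 0 / Real.sqrt (1 + c * s) with hg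
  -- basic facts about g
  have hupos : ∀ s : ℝ, 0 ≤ s → (0:ℝ) < 1 + c * s := by
    intro s hs; nlinarith
  have hsqrtpos : ∀ s : ℝ, 0 ≤ s → (0:ℝ) < Real.sqrt (1 + c * s) := by
    intro s hs; exact Real.sqrt_pos.2 (hupos s hs)
  have hgpos : ∀ s : ℝ, 0 ≤ s → 0 < g s := by
    intro s hs; exact div_pos h0 (hsqrtpos s hs)
  have hgmono : ∀ s : ℝ, 0 ≤ s → s ≤ T → g T ≤ g s := by
    intro s hs hsT
    apply div_le_div_of_nonneg_left h0.le (hsqrtpos s hs)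
    apply Real.sqrt_le_sqrt
    nlinarith
  -- derivative of g
  have hgderiv : ∀ s : ℝ, 0 ≤ s → HasDerivAt g (-γ * (g s) ^ 3) s := by
    intro s hs
    have hu : (0:ℝ) < 1 + c * s := hupos s hs
    have hsq : (0:ℝ) < Real.sqrt (1 + c * s) := hsqrtpos s hs
    have h1 : HasDerivAt (fun x : ℝ => 1 + c * x) c s := by
      simpa using ((hasDerivAt_id s).const_mul c).const_add 1
    have h2 : HasDerivAt (fun x : ℝ => Real.sqrt (1 + c * x))
        (c / (2 * Real.sqrt (1 + c * s))) s := h1.sqrt hu.ne'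
    have h3 := (hasDerivAt_const s (h 0)).div h2 hsq.ne'
    refine h3.congr_deriv (Eq.symm ?_)
    have hsq2 : Real.sqrt (1 + c * s) ^ 2 = 1 + c * s := Real.sq_sqrt hu.le
    have e1 : Real.sqrt (1 + c * s) ^ 3 = (1 + c * s) * Real.sqrt (1 + c * s) := by
      rw [pow_succ, hsq2]
    show -γ * (h 0 / Real.sqrt (1 + c * s)) ^ 3 = _
    rw [div_pow, e1]
    field_simp
    rw [hsq2]
    rw [hc]
    ring
  -- the ε-perturbed comparison
  have key : ∀ ε : ℝ, 0 < ε → ε * T < g T →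
      ∀ x ∈ Icc (0:ℝ) T, g x - ε * x ≤ h x := by
    intro ε hε hεT x hx
    have hcompare := image_le_of_deriv_right_lt_deriv_boundary'
      (f := fun s => -(h s)) (f' := fun s => -(h' s)) (a := 0) (b := T)
      (B := fun s => -(g s) + ε * s) (B' := fun s => γ * (g s) ^ 3 + ε)
      (fun s hs => ((hderiv s hs).continuousAt.continuousWithinAt).neg)
      (fun s hs => ((hderiv s (Ico_subset_Icc_self hs)).hasDerivWithinAt.neg))
      (by
        show -(h 0) ≤ -(g 0) + ε * 0
        have : g 0 = h 0 := by simp [hg]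
        simp [this])
      (by
        apply ContinuousOn.add
        · intro s hs
          exact ((hgderiv s hs.1).continuousAt.continuousWithinAt).neg
        · exact (continuous_const.mul continuous_id).continuousOn)
      (fun s hs => by
        show HasDerivWithinAt (fun s => -(g s) + ε * s) (γ * (g s) ^ 3 + ε) (Ici s) s
        have : γ * (g s) ^ 3 + ε = -(-γ * g s ^ 3) + ε * 1 := by ring
        rw [this]
        exact ((hgderiv s hs.1).neg.add
          ((hasDerivAt_id s).const_mul ε)).hasDerivWithinAt)
      (fun s hs heq => by
        have heq' : -(h s) = -(g s) + ε * s := heq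
        have hhx : h s = g s - ε * s := by linarith
        have hgs : 0 < g s := hgpos s hs.1
        have hεs : ε * s ≤ ε * T := mul_le_mul_of_nonneg_left hs.2.le hε.le
        have hεs0 : 0 ≤ ε * s := mul_nonneg hε.le hs.1
        have hpos : 0 < h s := by
          rw [hhx]
          have := hgmono s hs.1 hs.2.le
          linarith
        have hcd := hcond s (Ico_subset_Icc_self hs) hpos
        have hcube : (h s) ^ 3 ≤ (g s) ^ 3 := by
          apply pow_le_pow_left₀ hpos.le
          rw [hhx]; linarith
        have h4 : -(h' s) ≤ γ * (h s) ^ 3 := by linarith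
        have h5 : γ * (h s) ^ 3 ≤ γ * (g s) ^ 3 :=
          mul_le_mul_of_nonneg_left hcube hγ.le
        show -(h' s) < γ * (g s) ^ 3 + ε
        linarith)
    have h6 : -(h x) ≤ -(g x) + ε * x := hcompare hx
    linarith
  intro t ht
  have hgt : 0 < g t := hgpos t ht.1
  have hge : g t ≤ h t := by
    by_contra hlt
    push_neg at hlt
    have ht0 : 0 < t := by
      rcases lt_or_eq_of_le ht.1 with h' | h'
      · exact h'
      · exfalso
        have : g 0 = h 0 := by simp [hg]
        rw [← h'] at hlt
        linarith
    set d : ℝ := g t - h t with hd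
    have hdpos : 0 < d := by simp only [hd]; linarith
    have hgT : 0 < g T := hgpos T hT.le
    set ε : ℝ := min (g T / (2 * T)) (d / (2 * t)) with hε
    have hε1 : 0 < ε := lt_min (div_pos hgT (by positivity)) (div_pos hdpos (by positivity))
    have hε2 : ε * T < g T := by
      have h1 : ε ≤ g T / (2 * T) := min_le_left _ _
      have h2 : ε * T ≤ g T / (2 * T) * T := mul_le_mul_of_nonneg_right h1 hT.le
      have h3 : g T / (2 * T) * T = g T / 2 := by field_simp
      linarith
    have hk := key ε hε1 hε2 t ht
    have hεt : ε * t ≤ d / 2 := by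
      have h1 : ε ≤ d / (2 * t) := min_le_right _ _
      have h2 : ε * t ≤ d / (2 * t) * t := mul_le_mul_of_nonneg_right h1 ht0.le
      have h3 : d / (2 * t) * t = d / 2 := by field_simp
      linarith
    linarith
  exact ⟨hge, lt_of_lt_of_le hgt hge⟩
end
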